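/- Lemma 1 (cloning error bound, case J > K): for 1/2 < p < 1 and K < J, the trace distance between the marginal of the Gibbs state and the smaller Gibbs state satisfies (1/2)‖Tr_{2(J−K)}[ρ_J] − ρ_K‖₁ ≤ (δ^{1−s}/2)(1 + O(δ^s)) for any s > 0, where δ = (J−K)/J, ρ_J is the Gibbs state on the symmetric subspace of 2J qubits with eigenvalues p^{J+m}(1−p)^{J−m}/N_J. -/

import Mathlib

open Finset in
/-- Diagonal matrix element of the universal cloning channel `C_{J→K}` for `J > K`
(partial trace over `2(J-K)` qubits) on the Dicke state `|J,m⟩⟨J,m|`, with natural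
indices `a = J + m ∈ {0,…,2J}` and `k' = K + k ∈ {0,…,2K}`:
`⟨K,k|C_{J→K}(|J,m⟩⟨J,m|)|K,k⟩ = C(2J-2K, J-K+m-k) C(2K, K+k) / C(2J, J+m)`. -/
noncomputable def traceDiag (J K a k' : ℕ) : ℝ :=
  (if k' ≤ a then ((2*J-2*K).choose (a-k') : ℝ) else 0) *
    ((2*K).choose k' : ℝ) / ((2*J).choose a : ℝ)

open Finset

lemma vander (c d x n : ℕ) (hd : d < n) :
    ∑ t ∈ range n, (if t ≤ x then c.choose (x-t) * d.choose t else 0) = (c+d).choose x := by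
  have h1 : (c+d).choose x = ∑ j ∈ range (x+1), c.choose (x-j) * d.choose j := by
    rw [Nat.add_choose_eq, Finset.Nat.sum_antidiagonal_eq_sum_range_succ_mk]
    rw [← Finset.sum_range_reflect]
    refine Finset.sum_congr rfl fun j hj => ?_
    simp only [Finset.mem_range] at hj
    have hj' : j ≤ x := by omega
    have : x - (x - j) = j := by omega
    simp [this]
  rw [h1]
  set F : ℕ → ℕ := fun t => if t ≤ x then c.choose (x-t) * d.choose t else 0 with hF
  have e1 : ∑ t ∈ range n, F t = ∑ t ∈ range (max n (x+1)), F t := by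
    refine Finset.sum_subset (by
      intro t ht; simp only [Finset.mem_range] at *; omega) ?_
    intro t ht htn
    simp only [Finset.mem_range] at ht htn
    have : d < t := by omega
    simp [hF, Nat.choose_eq_zero_of_lt this]
  have e2 : ∑ j ∈ range (x+1), c.choose (x-j) * d.choose j = ∑ t ∈ range (max n (x+1)), F t := by
    have : ∑ j ∈ range (x+1), c.choose (x-j) * d.choose j = ∑ j ∈ range (x+1), F j := by
      refine Finset.sum_congr rfl fun j hj => ?_
      simp only [Finset.mem_range] at hj
      simp [hF, Nat.lt_succ_iff.mp hj]
    rw [this]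
    refine Finset.sum_subset (by intro t ht; simp only [Finset.mem_range] at *; omega) ?_
    intro t ht htn
    simp only [Finset.mem_range] at ht htn
    have : ¬ t ≤ x := by omega
    simp [hF, this]
  rw [e1, e2]

lemma rowsum {J K a : ℕ} (hK : K ≤ J) (ha : a ≤ 2*J) :
    ∑ k' ∈ range (2*K+1), traceDiag J K a k' = 1 := by
  have hnat : ∑ k' ∈ range (2*K+1),
      (if k' ≤ a then (2*J-2*K).choose (a-k') * (2*K).choose k' else 0) = (2*J).choose a := by
    have := vander (2*J-2*K) (2*K) a (2*K+1) (by omega)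
    rwa [show 2*J-2*K+2*K = 2*J by omega] at this
  have hC : ((2*J).choose a : ℝ) ≠ 0 := by
    exact_mod_cast Nat.choose_pos ha |>.ne'
  unfold traceDiag
  rw [← Finset.sum_div, div_eq_one_iff_eq hC]
  rw [← hnat]
  push_cast
  refine Finset.sum_congr rfl fun k' _ => ?_
  split <;> simp

lemma traceDiag_nonneg (J K a k' : ℕ) : 0 ≤ traceDiag J K a k' := by
  unfold traceDiag
  positivity



lemma kernel_comp {L K a k' : ℕ} (hK : K ≤ L) (ha : a ≤ 2*L+2) (hk' : k' ≤ 2*K) :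
    ∑ m ∈ range (2*L+1), traceDiag (L+1) L a m * traceDiag L K m k'
      = traceDiag (L+1) K a k' := by
  have step1 : ∀ m ∈ range (2*L+1),
      traceDiag (L+1) L a m * traceDiag L K m k'
        = ((if m ≤ a ∧ k' ≤ m then ((2).choose (a-m) * (2*L-2*K).choose (m-k') : ℕ) else 0) : ℝ)
            * ((2*K).choose k' : ℝ) / ((2*(L+1)).choose a : ℝ) := by
    intro m hm
    simp only [Finset.mem_range] at hm
    have hCL : ((2*L).choose m : ℝ) ≠ 0 := by
      exact_mod_cast (Nat.choose_pos (by omega)).ne'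
    unfold traceDiag
    rw [show 2*(L+1)-2*L = 2 by omega]
    rcases le_or_gt m a with h1 | h1 <;> rcases le_or_gt k' m with h2 | h2
    · rw [if_pos h1, if_pos h2, if_pos ⟨h1, h2⟩]
      push_cast
      calc (↑(Nat.choose 2 (a-m)) * ↑((2*L).choose m) / ↑((2*(L+1)).choose a)) *
            (↑((2*L-2*K).choose (m-k')) * ↑((2*K).choose k') / ↑((2*L).choose m))
          = ((↑((2*L).choose m) : ℝ)/↑((2*L).choose m)) *
            ((↑(Nat.choose 2 (a-m)) * ↑((2*L-2*K).choose (m-k'))) * ↑((2*K).choose k') / ↑((2*(L+1)).choose a)) := by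
            ring
        _ = _ := by rw [div_self hCL]; ring
    · rw [if_pos h1, if_neg (show ¬ k' ≤ m by omega),
        if_neg (show ¬ (m ≤ a ∧ k' ≤ m) by omega)]
      simp
    · rw [if_neg (show ¬ m ≤ a by omega), if_pos h2,
        if_neg (show ¬ (m ≤ a ∧ k' ≤ m) by omega)]
      simp
    · rw [if_neg (show ¬ m ≤ a by omega), if_neg (show ¬ k' ≤ m by omega),
        if_neg (show ¬ (m ≤ a ∧ k' ≤ m) by omega)]
      simp
  rw [Finset.sum_congr rfl step1]
  rw [← Finset.sum_div, ← Finset.sum_mul]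
  unfold traceDiag
  congr 2
  by_cases hka : k' ≤ a
  · rw [if_pos hka]
    have vsub : ∑ m ∈ range (2*L+1),
        ((if m ≤ a ∧ k' ≤ m then ((2).choose (a-m) * (2*L-2*K).choose (m-k') : ℕ) else 0) : ℝ)
        = ∑ m ∈ Ico k' (2*L+1),
        ((if m ≤ a ∧ k' ≤ m then ((2).choose (a-m) * (2*L-2*K).choose (m-k') : ℕ) else 0) : ℝ) := by
      symm
      refine Finset.sum_subset (by intro t ht; simp only [Finset.mem_Ico, Finset.mem_range] at *; omega) ?_
      intro t ht htn
      simp only [Finset.mem_range, Finset.mem_Ico] at ht htn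
      rw [if_neg (by omega)]
    rw [vsub, Finset.sum_Ico_eq_sum_range]
    have vx := vander 2 (2*L-2*K) (a-k') (2*L+1-k') (by omega)
    have hmain : ∑ t ∈ range (2*L+1-k'),
        ((if k'+t ≤ a ∧ k' ≤ k'+t then ((2).choose (a-(k'+t)) * (2*L-2*K).choose (k'+t-k') : ℕ) else 0) : ℝ)
        = ((∑ t ∈ range (2*L+1-k'), if t ≤ a-k' then (2).choose (a-k'-t) * (2*L-2*K).choose t else 0 : ℕ) : ℝ) := by
      push_cast
      refine Finset.sum_congr rfl fun t _ => ?_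
      have h2 : a-(k'+t) = a-k'-t := by omega
      have h3 : k'+t-k' = t := by omega
      rw [h2, h3]
      by_cases hh : t ≤ a-k'
      · rw [if_pos hh, if_pos (by omega)]
      · rw [if_neg hh, if_neg (by omega)]
    rw [hmain, vx, show 2+(2*L-2*K) = 2*(L+1)-2*K by omega]
  · rw [if_neg hka]
    refine Finset.sum_eq_zero fun m hm => ?_
    rw [if_neg (by omega)]

noncomputable def Nden (p : ℝ) (L : ℕ) : ℝ := ∑ b ∈ range (2*L+1), p^b * (1-p)^(2*L-b)

noncomputable def pushed (p : ℝ) (J K k' : ℕ) : ℝ :=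
  ∑ a ∈ range (2*J+1), (p^a * (1-p)^(2*J-a) / Nden p J) * traceDiag J K a k'

noncomputable def piK (p : ℝ) (K k' : ℕ) : ℝ := p^k' * (1-p)^(2*K-k') / Nden p K

noncomputable def err (p : ℝ) (J K : ℕ) : ℝ :=
  ∑ k' ∈ range (2*K+1), |pushed p J K k' - piK p K k'|

section facts
variable {p : ℝ} (hp : 1/2 < p) (hp1 : p < 1)
include hp hp1

lemma q_pos : 0 < 1 - p := by linarith

lemma p_pos : (0:ℝ) < p := by linarith

lemma Nden_pos (L : ℕ) : 0 < Nden p L := by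
  refine Finset.sum_pos (fun b _ => ?_) ⟨0, by simp⟩
  have := p_pos hp hp1; have := q_pos hp hp1
  positivity

lemma Nden_ge (L : ℕ) : p^(2*L) ≤ Nden p L := by
  have h : p^(2*L) = p^(2*L) * (1-p)^(2*L-2*L) := by simp
  rw [h]
  refine Finset.single_le_sum (f := fun b => p^b * (1-p)^(2*L-b)) (fun b _ => ?_) (by simp)
  have := p_pos hp hp1; have := q_pos hp hp1
  positivity

omit hp hp1 in
lemma Nden_closed (L : ℕ) : (2*p-1) * Nden p L = p^(2*L+1) - (1-p)^(2*L+1) := by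
  have h := geom_sum₂_mul p (1-p) (2*L+1)
  rw [show p - (1-p) = 2*p-1 by ring] at h
  have h2 : Nden p L = ∑ i ∈ range (2*L+1), p^i * (1-p)^(2*L+1-1-i) := by
    refine Finset.sum_congr rfl fun b hb => ?_
    simp only [Finset.mem_range] at hb
    rw [show 2*L+1-1-b = 2*L-b by omega]
  rw [h2, mul_comm, h]

lemma piK_nonneg (K k' : ℕ) : 0 ≤ piK p K k' := by
  have := p_pos hp hp1; have := q_pos hp hp1; have := Nden_pos hp hp1 (p := p) K
  unfold piK; positivity

lemma pushed_nonneg (J K k' : ℕ) : 0 ≤ pushed p J K k' := by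
  refine Finset.sum_nonneg fun a _ => mul_nonneg ?_ (traceDiag_nonneg _ _ _ _)
  have := p_pos hp hp1; have := q_pos hp hp1; have := Nden_pos hp hp1 (p := p) J
  positivity

lemma piK_sum (K : ℕ) : ∑ k' ∈ range (2*K+1), piK p K k' = 1 := by
  unfold piK
  rw [← Finset.sum_div, ← Nden]
  exact div_self (Nden_pos hp hp1 K).ne'

lemma pushed_sum {J K : ℕ} (hK : K ≤ J) : ∑ k' ∈ range (2*K+1), pushed p J K k' = 1 := by
  unfold pushed
  rw [Finset.sum_comm]
  have h1 : ∀ a ∈ range (2*J+1),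
      ∑ k' ∈ range (2*K+1), (p^a * (1-p)^(2*J-a) / Nden p J) * traceDiag J K a k'
        = p^a * (1-p)^(2*J-a) / Nden p J := by
    intro a ha
    simp only [Finset.mem_range] at ha
    rw [← Finset.mul_sum, rowsum hK (by omega), mul_one]
  rw [Finset.sum_congr rfl h1, ← Finset.sum_div, ← Nden]
  exact div_self (Nden_pos hp hp1 J).ne'

lemma err_le_two {J K : ℕ} (hK : K ≤ J) : err p J K ≤ 2 := by
  have h : ∀ k' ∈ range (2*K+1), |pushed p J K k' - piK p K k'| ≤ pushed p J K k' + piK p K k' := by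
    intro k' _
    rw [abs_sub_le_iff]
    constructor
    · linarith [piK_nonneg hp hp1 (p := p) K k']
    · linarith [pushed_nonneg hp hp1 (p := p) J K k']
  calc err p J K ≤ ∑ k' ∈ range (2*K+1), (pushed p J K k' + piK p K k') :=
        Finset.sum_le_sum h
    _ = 2 := by rw [Finset.sum_add_distrib, piK_sum hp hp1, pushed_sum hp hp1 hK]; norm_num

lemma pushed_self (K k' : ℕ) (hk' : k' ≤ 2*K) : pushed p K K k' = piK p K k' := by
  unfold pushed
  have h : ∀ a ∈ range (2*K+1),
      (p^a * (1-p)^(2*K-a) / Nden p K) * traceDiag K K a k'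
        = if a = k' then p^a * (1-p)^(2*K-a) / Nden p K else 0 := by
    intro a ha
    simp only [Finset.mem_range] at ha
    unfold traceDiag
    rw [show 2*K-2*K = 0 by omega]
    by_cases hak : a = k'
    · subst hak
      rw [if_pos rfl, if_pos le_rfl]
      rw [show a - a = 0 by omega, Nat.choose_zero_right]
      have hc : ((2*K).choose a : ℝ) ≠ 0 := by exact_mod_cast (Nat.choose_pos (by omega)).ne'
      rw [Nat.cast_one, one_mul, div_self hc, mul_one]
    · rw [if_neg hak]
      by_cases hka : k' ≤ a
      · rw [if_pos hka, Nat.choose_eq_zero_of_lt (by omega)]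
        simp
      · rw [if_neg hka]
        simp
  rw [Finset.sum_congr rfl h, Finset.sum_ite_eq' (range (2*K+1)) k'
    (fun a => p^a * (1-p)^(2*K-a) / Nden p K), if_pos (by simp only [Finset.mem_range]; omega)]
  rfl

omit hp hp1 in
lemma pushed_step {L K : ℕ} (hK : K ≤ L) (k' : ℕ) (hk' : k' ≤ 2*K) :
    pushed p (L+1) K k' = ∑ m ∈ range (2*L+1), pushed p (L+1) L m * traceDiag L K m k' := by
  unfold pushed
  have h1 : ∀ m ∈ range (2*L+1),
      (∑ a ∈ range (2*(L+1)+1), (p^a * (1-p)^(2*(L+1)-a) / Nden p (L+1)) * traceDiag (L+1) L a m)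
          * traceDiag L K m k'
        = ∑ a ∈ range (2*(L+1)+1),
            (p^a * (1-p)^(2*(L+1)-a) / Nden p (L+1)) * (traceDiag (L+1) L a m * traceDiag L K m k') := by
    intro m _
    rw [Finset.sum_mul]
    exact Finset.sum_congr rfl fun a _ => by ring
  rw [Finset.sum_congr rfl h1, Finset.sum_comm]
  refine Finset.sum_congr rfl fun a ha => ?_
  simp only [Finset.mem_range] at ha
  rw [← Finset.mul_sum, kernel_comp hK (by omega) hk']

lemma err_tri {L K : ℕ} (hK : K ≤ L) : err p (L+1) K ≤ err p (L+1) L + err p L K := by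
  have key : ∀ k' ∈ range (2*K+1),
      |pushed p (L+1) K k' - piK p K k'|
        ≤ (∑ m ∈ range (2*L+1), |pushed p (L+1) L m - piK p L m| * traceDiag L K m k')
          + |pushed p L K k' - piK p K k'| := by
    intro k' hk'
    simp only [Finset.mem_range] at hk'
    have hdecomp : pushed p (L+1) K k' - piK p K k'
        = (∑ m ∈ range (2*L+1), (pushed p (L+1) L m - piK p L m) * traceDiag L K m k')
          + (pushed p L K k' - piK p K k') := by
      rw [pushed_step hK k' (by omega)]
      have : ∑ m ∈ range (2*L+1), (pushed p (L+1) L m - piK p L m) * traceDiag L K m k'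
          = (∑ m ∈ range (2*L+1), pushed p (L+1) L m * traceDiag L K m k')
            - ∑ m ∈ range (2*L+1), piK p L m * traceDiag L K m k' := by
        rw [← Finset.sum_sub_distrib]
        exact Finset.sum_congr rfl fun m _ => by ring
      rw [this]
      have hLK : pushed p L K k' = ∑ m ∈ range (2*L+1), piK p L m * traceDiag L K m k' := rfl
      rw [hLK]; ring
    rw [hdecomp]
    refine (abs_add_le _ _).trans (add_le_add_left ?_ _)
    refine (Finset.abs_sum_le_sum_abs _ _).trans (le_of_eq ?_)
    exact Finset.sum_congr rfl fun m _ =>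
      (abs_mul _ _).trans (by rw [abs_of_nonneg (traceDiag_nonneg _ _ _ _)])
  calc err p (L+1) K
      ≤ ∑ k' ∈ range (2*K+1),
          ((∑ m ∈ range (2*L+1), |pushed p (L+1) L m - piK p L m| * traceDiag L K m k')
            + |pushed p L K k' - piK p K k'|) := Finset.sum_le_sum key
    _ = (∑ k' ∈ range (2*K+1), ∑ m ∈ range (2*L+1),
            |pushed p (L+1) L m - piK p L m| * traceDiag L K m k') + err p L K := by
        rw [Finset.sum_add_distrib]; rfl
    _ ≤ err p (L+1) L + err p L K := by
        refine add_le_add_left ?_ _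
        rw [Finset.sum_comm]
        refine (Finset.sum_le_sum fun m hm => ?_).trans le_rfl
        simp only [Finset.mem_range] at hm
        rw [← Finset.mul_sum, rowsum hK (by omega), mul_one]

lemma err_self (K : ℕ) : err p K K = 0 := by
  unfold err
  refine Finset.sum_eq_zero fun k' hk' => ?_
  simp only [Finset.mem_range] at hk'
  rw [pushed_self hp hp1 K k' (by omega), sub_self, abs_zero]

lemma err_telescope (A : ℝ) (hA : ∀ L : ℕ, err p (L+1) L ≤ A/(2*L+1)) :
    ∀ J K : ℕ, K ≤ J → err p J K ≤ ∑ L ∈ Ico K J, A/(2*L+1) := by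
  intro J
  induction J with
  | zero => intro K hK; rw [Nat.le_zero.mp hK]; simp [err_self hp hp1]
  | succ J ih =>
    intro K hK
    rcases Nat.lt_or_ge K (J+1) with h | h
    · have hKJ : K ≤ J := by omega
      calc err p (J+1) K ≤ err p (J+1) J + err p J K := err_tri hp hp1 hKJ
        _ ≤ A/(2*J+1) + ∑ L ∈ Ico K J, A/(2*L+1) := add_le_add (hA J) (ih K hKJ)
        _ = ∑ L ∈ Ico K (J+1), A/(2*L+1) := by
            rw [Finset.sum_Ico_succ_top hKJ]
            push_cast
            ring
    · have : K = J+1 := by omega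
      rw [this]
      simp [err_self hp hp1]

end facts

lemma geomS0 {u : ℝ} (h0 : 0 ≤ u) (h1 : u < 1) (n : ℕ) :
    ∑ i ∈ range n, u^i ≤ 1/(1-u) := by
  have hq : 0 < 1 - u := by linarith
  have h := geom_sum_mul u n
  rw [le_div_iff₀ hq]
  nlinarith [pow_nonneg h0 n]

lemma geomE1 (u : ℝ) (n : ℕ) :
    (1-u) * ∑ i ∈ range n, ((i:ℝ)+1) * u^i = (∑ i ∈ range n, u^i) - n * u^n := by
  induction n with
  | zero => simp
  | succ n ih =>
    rw [Finset.sum_range_succ, Finset.sum_range_succ, mul_add, ih]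
    push_cast
    ring

lemma geomE2 (u : ℝ) (n : ℕ) :
    (1-u) * ∑ i ∈ range n, ((i:ℝ)+1) * ((i:ℝ)+2) * u^i
      = 2 * (∑ i ∈ range n, ((i:ℝ)+1) * u^i) - n * (n+1) * u^n := by
  induction n with
  | zero => simp
  | succ n ih =>
    rw [Finset.sum_range_succ, Finset.sum_range_succ (f := fun i => ((i:ℝ)+1) * u^i), mul_add, ih]
    push_cast
    ring

lemma geomS1 {u : ℝ} (h0 : 0 ≤ u) (h1 : u < 1) (n : ℕ) :
    ∑ i ∈ range n, ((i:ℝ)+1) * u^i ≤ 1/(1-u)^2 := by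
  have hq : 0 < 1 - u := by linarith
  have h := geomE1 u n
  have h2 := geomS0 h0 h1 n
  have h3 : (1-u) * ∑ i ∈ range n, ((i:ℝ)+1) * u^i ≤ 1/(1-u) := by
    rw [h]
    have : 0 ≤ (n:ℝ) * u^n := by positivity
    linarith
  rw [show (1-u)^2 = (1-u)*(1-u) by ring, ← div_div, le_div_iff₀ hq, mul_comm]
  exact h3

lemma geomS2 {u : ℝ} (h0 : 0 ≤ u) (h1 : u < 1) (n : ℕ) :
    ∑ i ∈ range n, ((i:ℝ)+1) * ((i:ℝ)+2) * u^i ≤ 2/(1-u)^3 := by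
  have hq : 0 < 1 - u := by linarith
  have h := geomE2 u n
  have h2 := geomS1 h0 h1 n
  have h3 : (1-u) * ∑ i ∈ range n, ((i:ℝ)+1) * ((i:ℝ)+2) * u^i ≤ 2/(1-u)^2 := by
    rw [h]
    have h5 : 0 ≤ (n:ℝ) * ((n:ℝ)+1) * u^n := by positivity
    have h6 : 2 * ∑ i ∈ range n, ((i:ℝ)+1) * u^i ≤ 2 * (1/(1-u)^2) := by linarith
    rw [mul_one_div] at h6
    linarith
  rw [show (1-u)^3 = (1-u)^2*(1-u) by ring, ← div_div, le_div_iff₀ hq, mul_comm]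
  exact h3

lemma pow_small {u : ℝ} (h0 : 0 < u) (h1 : u < 1) (m : ℕ) (hm : 1 ≤ m) :
    u^m ≤ 1/((m:ℝ)*(1-u)) := by
  have hq : 0 < 1 - u := by linarith
  have hm' : (0:ℝ) < (m:ℝ) := by exact_mod_cast hm
  have ha : (0:ℝ) ≤ 1/u - 1 := by
    rw [sub_nonneg, le_div_iff₀ h0, one_mul]; linarith
  have hb := one_add_mul_le_pow (a := 1/u - 1) (by linarith) m
  rw [show (1:ℝ) + (1/u - 1) = 1/u by ring] at hb
  have hkey : (m:ℝ) * (1-u) ≤ (1/u)^m := by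
    have h4 : (1-u) ≤ 1/u - 1 := by
      rw [div_sub' h0.ne', le_div_iff₀ h0]
      nlinarith
    nlinarith
  have hup : 0 < u^m := pow_pos h0 m
  rw [le_div_iff₀ (by positivity)]
  have : u^m * (1/u)^m = 1 := by
    rw [← mul_pow, mul_one_div, div_self h0.ne', one_pow]
  nlinarith

lemma row_id (n k : ℕ) : (n+1) * n.choose k = (n+1).choose k * (n+1-k) := by
  have h1 := Nat.choose_succ_right_eq (n+1) k
  have h2 := Nat.add_one_mul_choose_eq n k
  rw [h2, h1]

lemma id0 (L k : ℕ) :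
    (2*L+1)*(2*L+2) * (2*L).choose k = (2*L+2).choose k * ((2*L+2-k)*(2*L+1-k)) := by
  have h1 := row_id (2*L) k
  have h2 := row_id (2*L+1) k
  calc (2*L+1)*(2*L+2) * (2*L).choose k
      = (2*L+2) * ((2*L+1) * (2*L).choose k) := by ring
    _ = (2*L+2) * ((2*L+1).choose k * (2*L+1-k)) := by rw [h1]
    _ = ((2*L+2) * (2*L+1).choose k) * (2*L+1-k) := by ring
    _ = ((2*L+2).choose k * (2*L+2-k)) * (2*L+1-k) := by rw [h2]
    _ = _ := by ring

lemma id1 (L k : ℕ) :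
    (2*L+1)*(2*L+2) * (2*L).choose k = (2*L+2).choose (k+1) * ((k+1)*(2*L+1-k)) := by
  have h := Nat.choose_succ_right_eq (2*L+2) k
  calc (2*L+1)*(2*L+2) * (2*L).choose k
      = (2*L+2).choose k * ((2*L+2-k)*(2*L+1-k)) := id0 L k
    _ = ((2*L+2).choose k * (2*L+2-k)) * (2*L+1-k) := by ring
    _ = ((2*L+2).choose (k+1) * (k+1)) * (2*L+1-k) := by rw [h]
    _ = _ := by ring

lemma id2 (L k : ℕ) :
    (2*L+1)*(2*L+2) * (2*L).choose k = (2*L+2).choose (k+2) * ((k+1)*(k+2)) := by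
  have h := Nat.choose_succ_right_eq (2*L+2) (k+1)
  rw [show 2*L+2-(k+1) = 2*L+1-k by omega] at h
  calc (2*L+1)*(2*L+2) * (2*L).choose k
      = (2*L+2).choose (k+1) * ((k+1)*(2*L+1-k)) := id1 L k
    _ = ((2*L+2).choose (k+1) * (2*L+1-k)) * (k+1) := by ring
    _ = ((2*L+2).choose (k+2) * (k+2)) * (k+1) := by rw [h]
    _ = _ := by ring

lemma pushed_formula {p : ℝ} (hp : 1/2 < p) (hp1 : p < 1) {L k i : ℕ} (hki : k + i = 2*L) :
    pushed p (L+1) L k = p^k * (1-p)^i *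
      ((1-p)^2*((i:ℝ)+1)*((i:ℝ)+2) + 2*p*(1-p)*((k:ℝ)+1)*((i:ℝ)+1) + p^2*((k:ℝ)+1)*((k:ℝ)+2))
      / (Nden p (L+1) * (((2*L:ℝ)+1)*((2*L:ℝ)+2))) := by
  have hN' := Nden_pos hp hp1 (L+1)
  unfold pushed
  have hsub : Icc k (k+2) ⊆ range (2*(L+1)+1) := by
    intro a ha; simp only [Finset.mem_Icc, Finset.mem_range] at *; omega
  have hzero : ∀ a ∈ range (2*(L+1)+1), a ∉ Icc k (k+2) →
      (p^a * (1-p)^(2*(L+1)-a) / Nden p (L+1)) * traceDiag (L+1) L a k = 0 := by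
    intro a ha hnot
    simp only [Finset.mem_range, Finset.mem_Icc, not_and_or, not_le] at ha hnot
    have hT : traceDiag (L+1) L a k = 0 := by
      unfold traceDiag
      rcases hnot with h | h
      · rw [if_neg (by omega)]; simp
      · rw [if_pos (by omega), show 2*(L+1)-2*L = 2 by omega,
          Nat.choose_eq_zero_of_lt (by omega)]
        simp
    rw [hT, mul_zero]
  rw [← Finset.sum_subset hsub hzero]
  rw [show k+2 = (k+1)+1 from rfl, Finset.sum_Icc_succ_top (by omega),
    Finset.sum_Icc_succ_top (by omega), Finset.Icc_self, Finset.sum_singleton]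
  have hD : (0:ℝ) < ((2*L:ℝ)+1)*((2*L:ℝ)+2) := by positivity
  have hC0 : (0:ℝ) < (((2*L+2).choose k : ℕ):ℝ) := by
    exact_mod_cast Nat.choose_pos (by omega)
  have hC1 : (0:ℝ) < (((2*L+2).choose (k+1) : ℕ):ℝ) := by
    exact_mod_cast Nat.choose_pos (by omega)
  have hC2 : (0:ℝ) < (((2*L+2).choose (k+2) : ℕ):ℝ) := by
    exact_mod_cast Nat.choose_pos (by omega)
  have hc0 : ((2*L:ℝ)+1)*((2*L:ℝ)+2) * ((2*L).choose k : ℝ)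
      = ((2*L+2).choose k : ℝ) * (((i:ℝ)+2)*((i:ℝ)+1)) := by
    have h := id0 L k
    rw [show 2*L+2-k = i+2 by omega, show 2*L+1-k = i+1 by omega] at h
    exact_mod_cast h
  have hc1 : ((2*L:ℝ)+1)*((2*L:ℝ)+2) * ((2*L).choose k : ℝ)
      = ((2*L+2).choose (k+1) : ℝ) * (((k:ℝ)+1)*((i:ℝ)+1)) := by
    have h := id1 L k
    rw [show 2*L+1-k = i+1 by omega] at h
    exact_mod_cast h
  have hc2 : ((2*L:ℝ)+1)*((2*L:ℝ)+2) * ((2*L).choose k : ℝ)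
      = ((2*L+2).choose (k+2) : ℝ) * (((k:ℝ)+1)*((k:ℝ)+2)) := by
    exact_mod_cast id2 L k
  have e0 : (p^k * (1-p)^(2*(L+1)-k) / Nden p (L+1)) * traceDiag (L+1) L k k
      = p^k * (1-p)^i * ((1-p)^2*((i:ℝ)+1)*((i:ℝ)+2))
        / (Nden p (L+1) * (((2*L:ℝ)+1)*((2*L:ℝ)+2))) := by
    unfold traceDiag
    rw [if_pos le_rfl, show 2*(L+1)-2*L = 2 by omega, Nat.sub_self,
      Nat.choose_zero_right, show 2*(L+1)-k = i+2 by omega, show 2*(L+1) = 2*L+2 by ring]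
    rw [div_mul_div_comm, div_eq_div_iff (by positivity) (by positivity)]
    push_cast
    linear_combination (p^k * (1-p)^(i+2) * Nden p (L+1)) * hc0
  have e1 : (p^(k+1) * (1-p)^(2*(L+1)-(k+1)) / Nden p (L+1)) * traceDiag (L+1) L (k+1) k
      = p^k * (1-p)^i * (2*p*(1-p)*((k:ℝ)+1)*((i:ℝ)+1))
        / (Nden p (L+1) * (((2*L:ℝ)+1)*((2*L:ℝ)+2))) := by
    unfold traceDiag
    rw [if_pos (by omega : k ≤ k+1), show 2*(L+1)-2*L = 2 by omega, show k+1-k = 1 by omega,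
      Nat.choose_one_right, show 2*(L+1)-(k+1) = i+1 by omega, show 2*(L+1) = 2*L+2 by ring]
    rw [div_mul_div_comm, div_eq_div_iff (by positivity) (by positivity)]
    push_cast
    linear_combination (2 * p^(k+1) * (1-p)^(i+1) * Nden p (L+1)) * hc1
  have e2 : (p^(k+2) * (1-p)^(2*(L+1)-(k+2)) / Nden p (L+1)) * traceDiag (L+1) L (k+2) k
      = p^k * (1-p)^i * (p^2*((k:ℝ)+1)*((k:ℝ)+2))
        / (Nden p (L+1) * (((2*L:ℝ)+1)*((2*L:ℝ)+2))) := by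
    unfold traceDiag
    rw [if_pos (by omega : k ≤ k+2), show 2*(L+1)-2*L = 2 by omega, show k+2-k = 2 by omega,
      Nat.choose_self, show 2*(L+1)-(k+2) = i by omega, show 2*(L+1) = 2*L+2 by ring]
    rw [div_mul_div_comm, div_eq_div_iff (by positivity) (by positivity)]
    push_cast
    linear_combination (p^(k+2) * (1-p)^i * Nden p (L+1)) * hc2
  rw [e0, e1, e2, ← add_div, ← add_div]
  congr 1
  ring

set_option maxHeartbeats 2000000 in
lemma onestep {p : ℝ} (hp : 1/2 < p) (hp1 : p < 1) (L : ℕ) :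
    err p (L+1) L ≤ (5*p/(2*p-1)^3) / (2*(L:ℝ)+1) := by
  have hp0 : (0:ℝ) < p := by linarith
  have hq0 : (0:ℝ) < 1-p := by linarith
  have hq1 : 1-p < p := by linarith
  set u : ℝ := (1-p)/p with hu_def
  have hu0 : 0 < u := div_pos hq0 hp0
  have hu1 : u < 1 := (div_lt_one hp0).mpr hq1
  have hw0 : 0 < 1-u := by linarith
  have hw_eq : 1-u = (2*p-1)/p := by rw [hu_def]; field_simp; ring
  have hD : (0:ℝ) < ((2*(L:ℝ))+1)*((2*(L:ℝ))+2) := by positivity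
  have hN : 0 < Nden p L := Nden_pos hp hp1 L
  have hN' : 0 < Nden p (L+1) := Nden_pos hp hp1 (L+1)
  have hN'ge : p^(2*L+2) ≤ Nden p (L+1) := by
    have := Nden_ge hp hp1 (p := p) (L+1)
    rwa [show 2*(L+1) = 2*L+2 by ring] at this
  -- closed form difference
  have hNN' : Nden p L * p^2 - Nden p (L+1) = -((1-p)^(2*L+1)) := by
    have h1 := Nden_closed (p := p) L
    have h2 := Nden_closed (p := p) (L+1)
    rw [show 2*(L+1)+1 = (2*L+1)+2 by ring, pow_add, pow_add] at h2
    have h2p : (2*p-1) ≠ 0 := by linarith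
    apply mul_left_cancel₀ h2p
    linear_combination p^2 * h1 - h2
  -- pointwise bound
  have key : ∀ k ∈ range (2*L+1), |pushed p (L+1) L k - piK p L k| ≤
      (p^k * (1-p)^(2*L-k) * ((((2*L-k:ℕ)):ℝ)+1) * ((((2*L-k:ℕ)):ℝ)+2))
          * (4*((L:ℝ)+1) / (Nden p (L+1) * (((2*(L:ℝ))+1)*((2*(L:ℝ))+2))))
        + (p^k * (1-p)^(2*L-k)) * ((1-p)^(2*L+1) / (Nden p L * Nden p (L+1))) := by
    intro k hk
    simp only [Finset.mem_range] at hk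
    set i : ℕ := 2*L-k with hi_def
    have hki : k + i = 2*L := by omega
    have hkiR : (k:ℝ) + (i:ℝ) = 2*(L:ℝ) := by exact_mod_cast hki
    have hkR : (k:ℝ) = 2*(L:ℝ) - (i:ℝ) := by linarith
    have hiL : (i:ℝ) ≤ 2*(L:ℝ) := by
      have : i ≤ 2*L := by omega
      exact_mod_cast this
    have hi0 : (0:ℝ) ≤ (i:ℝ) := Nat.cast_nonneg i
    have hL0 : (0:ℝ) ≤ (L:ℝ) := Nat.cast_nonneg L
    set P : ℝ := (1-p)^2*((i:ℝ)+1)*((i:ℝ)+2) + 2*p*(1-p)*((k:ℝ)+1)*((i:ℝ)+1)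
        + p^2*((k:ℝ)+1)*((k:ℝ)+2) with hP_def
    set D : ℝ := ((2*(L:ℝ))+1)*((2*(L:ℝ))+2) with hD_def
    have hdiff : pushed p (L+1) L k - piK p L k
        = p^k * (1-p)^i * (Nden p L * P - Nden p (L+1) * D) / (Nden p L * Nden p (L+1) * D) := by
      rw [pushed_formula hp hp1 hki]
      unfold piK
      rw [show 2*L-k = i from rfl]
      field_simp
      ring
    have hPp : |P - p^2*D| ≤ 4*((L:ℝ)+1)*((i:ℝ)+1)*((i:ℝ)+2) := by
      have hid : P - p^2*D = (1-p)^2*((i:ℝ)+1)*((i:ℝ)+2)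
          + 2*p*(1-p)*(2*(L:ℝ)+1-(i:ℝ))*((i:ℝ)+1)
          - p^2*(i:ℝ)*(4*(L:ℝ)+3-(i:ℝ)) := by
        rw [hP_def, hD_def, hkR]; ring
      rw [hid]
      have hb1 : 0 ≤ (1-p)^2*((i:ℝ)+1)*((i:ℝ)+2) := by positivity
      have hb1' : (1-p)^2*((i:ℝ)+1)*((i:ℝ)+2) ≤ ((L:ℝ)+1)*((i:ℝ)+1)*((i:ℝ)+2) := by
        have h1 : (1-p)^2 ≤ 1 := by nlinarith [mul_pos hp0 hq0]
        have hZ : (0:ℝ) ≤ ((i:ℝ)+1)*((i:ℝ)+2) := by positivity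
        nlinarith [mul_le_mul_of_nonneg_right h1 hZ, mul_nonneg hL0 hZ]
      have hb2 : 0 ≤ 2*p*(1-p)*(2*(L:ℝ)+1-(i:ℝ))*((i:ℝ)+1) := by
        have : (0:ℝ) ≤ 2*(L:ℝ)+1-(i:ℝ) := by linarith
        positivity
      have hb2' : 2*p*(1-p)*(2*(L:ℝ)+1-(i:ℝ))*((i:ℝ)+1) ≤ ((L:ℝ)+1)*((i:ℝ)+1)*((i:ℝ)+2) := by
        have h1 : 2*p*(1-p) ≤ 1/2 := by nlinarith [sq_nonneg (p-(1-p))]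
        have h2 : 2*(L:ℝ)+1-(i:ℝ) ≤ 2*((L:ℝ)+1) := by linarith
        have h3 : ((i:ℝ)+1) ≤ ((i:ℝ)+1)*((i:ℝ)+2)/2 := by nlinarith
        nlinarith [mul_nonneg (by linarith : (0:ℝ) ≤ (i:ℝ)+1) (by linarith : (0:ℝ) ≤ 2*(L:ℝ)+1-(i:ℝ)),
          mul_nonneg (mul_nonneg hi0 (by linarith : (0:ℝ) ≤ (i:ℝ)+1)) (by linarith : (0:ℝ) ≤ (L:ℝ)+1)]
      have hb3 : 0 ≤ p^2*(i:ℝ)*(4*(L:ℝ)+3-(i:ℝ)) := by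
        have : (0:ℝ) ≤ 4*(L:ℝ)+3-(i:ℝ) := by linarith
        positivity
      have hb3' : p^2*(i:ℝ)*(4*(L:ℝ)+3-(i:ℝ)) ≤ 2*((L:ℝ)+1)*((i:ℝ)+1)*((i:ℝ)+2) := by
        have h1 : p^2 ≤ 1 := by nlinarith [mul_pos hp0 hq0]
        have h2 : 4*(L:ℝ)+3-(i:ℝ) ≤ 4*((L:ℝ)+1) := by linarith
        have h3 : (i:ℝ) ≤ ((i:ℝ)+1)*((i:ℝ)+2)/2 := by nlinarith
        nlinarith [mul_nonneg hi0 (by linarith : (0:ℝ) ≤ 4*(L:ℝ)+3-(i:ℝ)),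
          mul_nonneg (mul_nonneg hi0 (by linarith : (0:ℝ) ≤ (i:ℝ))) (by linarith : (0:ℝ) ≤ (L:ℝ)+1)]
      rw [abs_le]
      constructor <;> nlinarith
    have hNPbound : |Nden p L * P - Nden p (L+1) * D|
        ≤ Nden p L * (4*((L:ℝ)+1)*((i:ℝ)+1)*((i:ℝ)+2)) + (1-p)^(2*L+1) * D := by
      have hsplit : Nden p L * P - Nden p (L+1) * D
          = Nden p L * (P - p^2*D) + (Nden p L * p^2 - Nden p (L+1)) * D := by ring
      rw [hsplit, hNN']
      calc |Nden p L * (P - p^2*D) + -((1-p)^(2*L+1)) * D|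
          ≤ |Nden p L * (P - p^2*D)| + |(-((1-p)^(2*L+1))) * D| := abs_add_le _ _
        _ = Nden p L * |P - p^2*D| + (1-p)^(2*L+1) * D := by
            rw [abs_mul, abs_mul, abs_of_pos hN, abs_neg,
              abs_of_nonneg (by positivity : (0:ℝ) ≤ (1-p)^(2*L+1)), abs_of_pos hD]
        _ ≤ _ := by
            have := mul_le_mul_of_nonneg_left hPp hN.le
            linarith
    have habs : |pushed p (L+1) L k - piK p L k|
        = p^k * (1-p)^i * |Nden p L * P - Nden p (L+1) * D| / (Nden p L * Nden p (L+1) * D) := by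
      rw [hdiff, abs_div, abs_mul, abs_mul,
        abs_of_nonneg (by positivity : (0:ℝ) ≤ p^k),
        abs_of_nonneg (by positivity : (0:ℝ) ≤ (1-p)^i),
        abs_of_pos (by positivity : (0:ℝ) < Nden p L * Nden p (L+1) * D)]
    have hfact : p^k * (1-p)^i * (Nden p L * (4*((L:ℝ)+1)*((i:ℝ)+1)*((i:ℝ)+2)) + (1-p)^(2*L+1) * D)
          / (Nden p L * Nden p (L+1) * D)
        = (p^k * (1-p)^i * (((i:ℝ))+1) * (((i:ℝ))+2)) * (4*((L:ℝ)+1) / (Nden p (L+1) * D))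
          + (p^k * (1-p)^i) * ((1-p)^(2*L+1) / (Nden p L * Nden p (L+1))) := by
      field_simp
    rw [habs, ← hfact]
    rw [div_le_div_iff_of_pos_right (by positivity)]
    exact mul_le_mul_of_nonneg_left hNPbound (by positivity)
  -- sum the pointwise bounds
  have hsum : err p (L+1) L ≤
      (∑ k ∈ range (2*L+1), p^k * (1-p)^(2*L-k) * ((((2*L-k:ℕ)):ℝ)+1) * ((((2*L-k:ℕ)):ℝ)+2))
          * (4*((L:ℝ)+1) / (Nden p (L+1) * (((2*(L:ℝ))+1)*((2*(L:ℝ))+2))))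
        + Nden p L * ((1-p)^(2*L+1) / (Nden p L * Nden p (L+1))) := by
    refine (Finset.sum_le_sum key).trans (le_of_eq ?_)
    rw [Finset.sum_add_distrib, ← Finset.sum_mul, ← Finset.sum_mul]
    rfl
  have hS : ∑ k ∈ range (2*L+1), p^k * (1-p)^(2*L-k) * ((((2*L-k:ℕ)):ℝ)+1) * ((((2*L-k:ℕ)):ℝ)+2)
      ≤ p^(2*L) * (2/(1-u)^3) := by
    rw [← Finset.sum_range_reflect]
    have hcong : ∀ j ∈ range (2*L+1),
        p^(2*L+1-1-j) * (1-p)^(2*L-(2*L+1-1-j))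
            * ((((2*L-(2*L+1-1-j):ℕ)):ℝ)+1) * ((((2*L-(2*L+1-1-j):ℕ)):ℝ)+2)
          = p^(2*L) * (((j:ℝ)+1) * ((j:ℝ)+2) * u^j) := by
      intro j hj
      simp only [Finset.mem_range] at hj
      rw [show 2*L+1-1-j = 2*L-j by omega, show 2*L-(2*L-j) = j by omega,
        pow_sub₀ p hp0.ne' (by omega : j ≤ 2*L), hu_def, div_pow]
      field_simp
    rw [Finset.sum_congr rfl hcong, ← Finset.mul_sum]
    exact mul_le_mul_of_nonneg_left (geomS2 hu0.le hu1 (2*L+1)) (by positivity)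
  have hNc2 : Nden p L * ((1-p)^(2*L+1) / (Nden p L * Nden p (L+1)))
      = (1-p)^(2*L+1) / Nden p (L+1) := by
    field_simp <;> ring
  have hA : (0:ℝ) < 2*p-1 := by linarith
  have hM : (0:ℝ) < 2*(L:ℝ)+1 := by positivity
  have hp2L : (0:ℝ) < p^(2*L) := pow_pos hp0 _
  -- first term bound
  have h1 : (p^(2*L) * (2/(1-u)^3))
        * (4*((L:ℝ)+1) / (Nden p (L+1) * (((2*(L:ℝ))+1)*((2*(L:ℝ))+2))))
      ≤ 4*p/((2*p-1)^3*(2*(L:ℝ)+1)) := by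
    have e1 : (p^(2*L) * (2/(1-u)^3))
          * (4*((L:ℝ)+1) / (Nden p (L+1) * (((2*(L:ℝ))+1)*((2*(L:ℝ))+2))))
        = 8*p^(2*L)*p^3*((L:ℝ)+1)
          / ((2*p-1)^3 * (Nden p (L+1) * (((2*(L:ℝ))+1)*((2*(L:ℝ))+2)))) := by
      rw [hw_eq]
      field_simp <;> ring
    rw [e1]
    have hstep : 8*p^(2*L)*p^3*((L:ℝ)+1)
          / ((2*p-1)^3 * (Nden p (L+1) * (((2*(L:ℝ))+1)*((2*(L:ℝ))+2))))
        ≤ 8*p^(2*L)*p^3*((L:ℝ)+1)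
          / ((2*p-1)^3 * (p^(2*L+2) * (((2*(L:ℝ))+1)*((2*(L:ℝ))+2)))) := by
      refine div_le_div_of_nonneg_left (by positivity) (by positivity) ?_
      have hDpos : (0:ℝ) < ((2*(L:ℝ))+1)*((2*(L:ℝ))+2) := by positivity
      gcongr
    refine hstep.trans (le_of_eq ?_)
    have hpow : p^(2*L+2) = p^(2*L) * p^2 := by ring
    rw [hpow]
    field_simp <;> ring
  -- second term bound
  have h2 : (1-p)^(2*L+1) / Nden p (L+1) ≤ p/((2*p-1)^3*(2*(L:ℝ)+1)) := by
    have s1 : (1-p)^(2*L+1) / Nden p (L+1) ≤ (1-p)^(2*L+1) / p^(2*L+2) :=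
      div_le_div_of_nonneg_left (by positivity) (by positivity) hN'ge
    have s2 : (1-p)^(2*L+1) / p^(2*L+2) = u^(2*L+1)/p := by
      rw [hu_def, div_pow, div_div]
      congr 1
    have hps := pow_small hu0 hu1 (2*L+1) (by omega)
    push_cast at hps
    have s3 : u^(2*L+1)/p ≤ (1/((2*(L:ℝ)+1)*(1-u)))/p :=
      (div_le_div_iff_of_pos_right hp0).mpr hps
    have s4 : (1/((2*(L:ℝ)+1)*(1-u)))/p = 1/((2*p-1)*(2*(L:ℝ)+1)) := by
      rw [hw_eq]
      field_simp
    have s5 : 1/((2*p-1)*(2*(L:ℝ)+1)) ≤ p/((2*p-1)^3*(2*(L:ℝ)+1)) := by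
      rw [div_le_div_iff₀ (by positivity) (by positivity)]
      have hkey : (2*p-1)^2 ≤ p := by nlinarith
      nlinarith [mul_pos hA hM, mul_pos (mul_pos hA hA) hM]
    calc (1-p)^(2*L+1) / Nden p (L+1) ≤ (1-p)^(2*L+1) / p^(2*L+2) := s1
      _ = u^(2*L+1)/p := s2
      _ ≤ (1/((2*(L:ℝ)+1)*(1-u)))/p := s3
      _ = 1/((2*p-1)*(2*(L:ℝ)+1)) := s4
      _ ≤ _ := s5
  -- assemble
  have c1nonneg : (0:ℝ) ≤ 4*((L:ℝ)+1) / (Nden p (L+1) * (((2*(L:ℝ))+1)*((2*(L:ℝ))+2))) := by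
    positivity
  have hfin1 : (∑ k ∈ range (2*L+1),
        p^k * (1-p)^(2*L-k) * ((((2*L-k:ℕ)):ℝ)+1) * ((((2*L-k:ℕ)):ℝ)+2))
          * (4*((L:ℝ)+1) / (Nden p (L+1) * (((2*(L:ℝ))+1)*((2*(L:ℝ))+2))))
      ≤ 4*p/((2*p-1)^3*(2*(L:ℝ)+1)) :=
    (mul_le_mul_of_nonneg_right hS c1nonneg).trans h1
  have hrw : (5*p/(2*p-1)^3) / (2*(L:ℝ)+1) = 5*p/((2*p-1)^3*(2*(L:ℝ)+1)) := div_div _ _ _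
  rw [hrw]
  have := hsum
  rw [hNc2] at this
  have h2' := h2
  have goal1 : 4*p/((2*p-1)^3*(2*(L:ℝ)+1)) + p/((2*p-1)^3*(2*(L:ℝ)+1))
      = 5*p/((2*p-1)^3*(2*(L:ℝ)+1)) := by
    rw [← add_div]
    ring_nf
  linarith


open Finset in
/-- Lemma 1, case `J > K`: for `1/2 < p < 1` and any `s > 0` there is a constant
`C > 0` such that for all `K < J`, with `δ = (J-K)/J`, the trace distance between
`C_{J→K}(ρ_J) = Tr_{2(J-K)}[ρ_J]` and the Gibbs state `ρ_K` satisfies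
`(1/2)‖Tr_{2(J-K)}[ρ_J] − ρ_K‖₁ ≤ (δ^(1-s)/2)(1 + C δ^s)`.  Both states are diagonal
in the `|K,k⟩` basis, so the trace distance is the ℓ¹-distance of the spectra; the
eigenvalues of `ρ_J` are `p^a (1-p)^(2J-a)/N_J` (with `a = J+m`). -/
theorem cloning_error_partial_trace (p : ℝ) (hp : 1/2 < p) (hp1 : p < 1)
    (s : ℝ) (hs : 0 < s) :
    ∃ C : ℝ, 0 < C ∧ ∀ J K : ℕ, K < J →
      (1/2) * ∑ k' ∈ range (2*K+1),
          |(∑ a ∈ range (2*J+1),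
              (p^a * (1-p)^(2*J-a) / ∑ b ∈ range (2*J+1), p^b * (1-p)^(2*J-b)) *
                traceDiag J K a k')
            - p^(k') * (1-p)^(2*K-k') / ∑ b ∈ range (2*K+1), p^b * (1-p)^(2*K-b)|
        ≤ ((((J : ℝ) - K)/J) ^ ((1:ℝ) - s) / 2) * (1 + C * (((J : ℝ) - K)/J) ^ (s : ℝ)) := by
  have hA : (0:ℝ) < 5*p/(2*p-1)^3 := by
    have : (0:ℝ) < 2*p-1 := by linarith
    positivity
  refine ⟨max 4 (5*p/(2*p-1)^3), lt_max_of_lt_left (by norm_num), ?_⟩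
  set C : ℝ := max 4 (5*p/(2*p-1)^3) with hC_def
  have hC4 : (4:ℝ) ≤ C := le_max_left _ _
  have hCA : 5*p/(2*p-1)^3 ≤ C := le_max_right _ _
  have hC0 : (0:ℝ) < C := by linarith
  intro J K hKJ
  have hKJ' : K ≤ J := hKJ.le
  have hJpos : 0 < J := by omega
  have hJ0 : (0:ℝ) < (J:ℝ) := by exact_mod_cast hJpos
  have hKJR : (K:ℝ) < (J:ℝ) := by exact_mod_cast hKJ
  set δ : ℝ := ((J:ℝ) - K)/J with hδ_def
  have hδ0 : 0 < δ := by
    rw [hδ_def]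
    apply div_pos (by linarith) hJ0
  -- main estimate: err ≤ C * δ
  have herrC : err p J K ≤ C * δ := by
    rcases Nat.lt_or_ge (2*K) J with hcase | hcase
    · -- δ ≥ 1/2, use err ≤ 2
      have h2K : ((2*K:ℕ):ℝ) + 1 ≤ (J:ℝ) := by exact_mod_cast hcase
      push_cast at h2K
      have hδhalf : 1/2 ≤ δ := by
        rw [hδ_def, le_div_iff₀ hJ0]
        linarith
      calc err p J K ≤ 2 := err_le_two hp hp1 hKJ'
        _ ≤ C * δ := by nlinarith
    · -- δ < 1/2, telescope
      have htel := err_telescope hp hp1 (5*p/(2*p-1)^3)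
        (fun L => onestep hp hp1 L) J K hKJ'
      have hJle : ∀ L ∈ Ico K J, (5*p/(2*p-1)^3)/(2*(L:ℝ)+1) ≤ (5*p/(2*p-1)^3)/(J:ℝ) := by
        intro L hL
        simp only [Finset.mem_Ico] at hL
        have h1 : (J:ℝ) ≤ 2*(L:ℝ)+1 := by
          have : J ≤ 2*L+1 := by omega
          exact_mod_cast this
        exact div_le_div_of_nonneg_left hA.le hJ0 h1
      have hcard : ∑ L ∈ Ico K J, (5*p/(2*p-1)^3)/(J:ℝ)
          = ((J-K:ℕ):ℝ) * ((5*p/(2*p-1)^3)/(J:ℝ)) := by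
        rw [Finset.sum_const, Nat.card_Ico, nsmul_eq_mul]
      have hJKcast : ((J-K:ℕ):ℝ) = (J:ℝ) - K := by
        exact Nat.cast_sub hKJ'
      calc err p J K ≤ ∑ L ∈ Ico K J, (5*p/(2*p-1)^3)/(2*(L:ℝ)+1) := htel
        _ ≤ ∑ L ∈ Ico K J, (5*p/(2*p-1)^3)/(J:ℝ) := Finset.sum_le_sum hJle
        _ = ((J:ℝ)-K) * ((5*p/(2*p-1)^3)/(J:ℝ)) := by rw [hcard, hJKcast]
        _ = (5*p/(2*p-1)^3) * δ := by rw [hδ_def]; ring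
        _ ≤ C * δ := mul_le_mul_of_nonneg_right hCA hδ0.le
  -- convert goal to err
  have herr_eq : ∑ k' ∈ range (2*K+1),
      |(∑ a ∈ range (2*J+1),
          (p^a * (1-p)^(2*J-a) / ∑ b ∈ range (2*J+1), p^b * (1-p)^(2*J-b)) *
            traceDiag J K a k')
        - p^(k') * (1-p)^(2*K-k') / ∑ b ∈ range (2*K+1), p^b * (1-p)^(2*K-b)|
      = err p J K := rfl
  rw [herr_eq]
  have hδpow : δ^((1:ℝ)-s) * δ^(s:ℝ) = δ := by
    rw [← Real.rpow_add hδ0, show (1:ℝ)-s+s = 1 by ring, Real.rpow_one]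
  have hrpos : 0 < δ^((1:ℝ)-s) := Real.rpow_pos_of_pos hδ0 _
  have hRHS : (δ^((1:ℝ)-s)/2) * (1 + C*δ^(s:ℝ)) = δ^((1:ℝ)-s)/2 + C*δ/2 := by
    rw [mul_add, mul_one,
      show δ^((1:ℝ)-s)/2 * (C*δ^(s:ℝ)) = (C/2)*(δ^((1:ℝ)-s)*δ^(s:ℝ)) by ring, hδpow]
    ring
  rw [hRHS]
  linarith
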